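/- Fix ε ∈ (0,1), integers m ≥ 1, n ≥ 1 and a real W ≥ 0 with εW/m ≤ 1. Suppose nonnegative random variables X_{i,j} ∈ [0,1] (i ∈ [n], j ∈ [m]) are such that the potentials Φ(s) = ∑_{i=1}^n E[(1-ε)^{∑_{j=1}^s X_{i,j}}] · (1 - εW/m)^{m-s} satisfy Φ(m) ≤ Φ(0). Then Pr[min_i ∑_{j=1}^m X_{i,j} ≤ (1-ε)W] ≤ n · exp(-ε²W/2). -/

import Mathlib

open MeasureTheory

lemma key_deriv {x : ℝ} (hx : x < 1) :
    HasDerivAt (fun x : ℝ => (1 - x) * Real.log (1 - x) + x - x ^ 2 / 2)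
      (-Real.log (1 - x) - x) x := by
  have hne : (1 : ℝ) - x ≠ 0 := by linarith
  have h1 : HasDerivAt (fun x : ℝ => 1 - x) (-1) x := (hasDerivAt_id x).const_sub 1
  have hlog : HasDerivAt (fun x : ℝ => Real.log (1 - x)) (-1 / (1 - x)) x := h1.log hne
  have hmul := h1.mul hlog
  have hsq : HasDerivAt (fun x : ℝ => x ^ 2 / 2) x x := by
    have := (hasDerivAt_pow 2 x).div_const 2
    simpa using this
  have := ((hmul.add (hasDerivAt_id x)).sub hsq)
  refine this.congr_deriv ?_
  rw [show (1 - x) * (-1 / (1 - x)) = -1 by field_simp]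
  ring

lemma key_ineq {ε : ℝ} (h0 : 0 ≤ ε) (h1 : ε < 1) :
    0 ≤ (1 - ε) * Real.log (1 - ε) + ε - ε ^ 2 / 2 := by
  set f : ℝ → ℝ := fun x => (1 - x) * Real.log (1 - x) + x - x ^ 2 / 2 with hf
  have hmono : MonotoneOn f (Set.Icc 0 ε) := by
    apply monotoneOn_of_deriv_nonneg (convex_Icc 0 ε)
    · intro x hx
      exact ((key_deriv (lt_of_le_of_lt hx.2 h1)).continuousAt).continuousWithinAt
    · intro x hx
      rw [interior_Icc] at hx
      exact ((key_deriv (lt_trans hx.2 h1)).differentiableAt).differentiableWithinAt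
    · intro x hx
      rw [interior_Icc] at hx
      have hx1 : x < 1 := lt_trans hx.2 h1
      rw [(key_deriv hx1).deriv]
      have hlog : Real.log (1 - x) ≤ -x := by
        have := Real.log_le_sub_one_of_pos (x := 1 - x) (by linarith)
        linarith
      linarith
  have h00 : f 0 = 0 := by simp [hf]
  have := hmono (Set.mem_Icc.2 ⟨le_refl 0, h0⟩) (Set.mem_Icc.2 ⟨h0, le_refl ε⟩) h0
  rw [h00] at this
  exact this

theorem stmt_14 {Ω : Type*} [MeasurableSpace Ω] (P : Measure Ω) [IsProbabilityMeasure P]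
    (ε : ℝ) (hε0 : 0 < ε) (hε1 : ε < 1) (m n : ℕ) (hm : 1 ≤ m) (hn : 1 ≤ n)
    (W : ℝ) (hW : 0 ≤ W) (hWm : ε * W / m ≤ 1)
    (X : Fin n → Fin m → Ω → ℝ)
    (hX : ∀ i j ω, X i j ω ∈ Set.Icc (0 : ℝ) 1)
    (hmeas : ∀ i j, Measurable (X i j))
    (hΦ : ∑ i : Fin n, ∫ ω, (1 - ε) ^ (∑ j : Fin m, X i j ω) ∂P ≤
          (n : ℝ) * (1 - ε * W / m) ^ m) :
    (P {ω | (⨅ i : Fin n, ∑ j : Fin m, X i j ω) ≤ (1 - ε) * W}).toReal ≤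
      (n : ℝ) * Real.exp (-(ε ^ 2) * W / 2) := by
  have hb0 : (0 : ℝ) < 1 - ε := by linarith
  have hb1 : (1 : ℝ) - ε < 1 := by linarith
  set c : ℝ := (1 - ε) * W with hc
  set S : Fin n → Ω → ℝ := fun i ω => ∑ j : Fin m, X i j ω with hSdef
  have hSmeas : ∀ i, Measurable (S i) := fun i =>
    Finset.measurable_sum _ fun j _ => hmeas i j
  have hSnn : ∀ i ω, 0 ≤ S i ω := fun i ω =>
    Finset.sum_nonneg fun j _ => (hX i j ω).1
  set g : Fin n → Ω → ℝ := fun i ω => (1 - ε) ^ (S i ω) with hgdef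
  set a : ℝ := (1 - ε) ^ c with ha
  have ha0 : 0 < a := Real.rpow_pos_of_pos hb0 c
  -- measurability and integrability of g i
  have hgmeas : ∀ i, Measurable (g i) := by
    intro i
    have : g i = fun ω => Real.exp (Real.log (1 - ε) * S i ω) := by
      funext ω
      rw [hgdef]
      simp only
      rw [Real.rpow_def_of_pos hb0, mul_comm]
    rw [this]
    exact Real.measurable_exp.comp ((measurable_const.mul (hSmeas i)))
  have hg01 : ∀ i ω, 0 ≤ g i ω ∧ g i ω ≤ 1 := by
    intro i ω
    exact ⟨(Real.rpow_pos_of_pos hb0 _).le, Real.rpow_le_one hb0.le hb1.le (hSnn i ω)⟩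
  have hgint : ∀ i, Integrable (g i) P := by
    intro i
    refine (integrable_const (1 : ℝ)).mono' (hgmeas i).aestronglyMeasurable ?_
    filter_upwards with ω
    rw [Real.norm_eq_abs, abs_of_nonneg (hg01 i ω).1]
    exact (hg01 i ω).2
  -- events
  set A : Fin n → Set Ω := fun i => {ω | S i ω ≤ c} with hA
  have hAeq : ∀ i, A i = {ω | a ≤ g i ω} := by
    intro i
    ext ω
    simp only [hA, Set.mem_setOf_eq, hgdef, ha]
    exact (Real.rpow_le_rpow_left_iff_of_base_lt_one hb0 hb1).symm
  -- Markov for each i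
  have hmarkov : ∀ i, a * (P (A i)).toReal ≤ ∫ ω, g i ω ∂P := by
    intro i
    rw [hAeq i]
    exact mul_meas_ge_le_integral_of_nonneg
      (Filter.Eventually.of_forall fun ω => (hg01 i ω).1) (hgint i) a
  -- union bound
  have hsub : {ω | (⨅ i : Fin n, ∑ j : Fin m, X i j ω) ≤ c} ⊆ ⋃ i, A i := by
    intro ω hω
    simp only [Set.mem_setOf_eq] at hω
    haveI : Nonempty (Fin n) := ⟨⟨0, hn⟩⟩
    obtain ⟨i, hi⟩ := Finite.exists_min (fun i => S i ω)
    have hle : S i ω ≤ ⨅ i, S i ω := le_ciInf hi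
    refine Set.mem_iUnion.2 ⟨i, ?_⟩
    exact le_trans hle hω
  have hunion : (P {ω | (⨅ i : Fin n, ∑ j : Fin m, X i j ω) ≤ c}).toReal ≤
      ∑ i : Fin n, (P (A i)).toReal := by
    have h1 : P {ω | (⨅ i : Fin n, ∑ j : Fin m, X i j ω) ≤ c} ≤ ∑ i : Fin n, P (A i) :=
      le_trans (measure_mono hsub) (measure_iUnion_fintype_le P A)
    have h2 : (∑ i : Fin n, P (A i)) ≠ ⊤ :=
      ENNReal.sum_ne_top.2 fun i _ => measure_ne_top P _
    calc (P {ω | (⨅ i : Fin n, ∑ j : Fin m, X i j ω) ≤ c}).toReal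
        ≤ (∑ i : Fin n, P (A i)).toReal := ENNReal.toReal_mono h2 h1
      _ = ∑ i : Fin n, (P (A i)).toReal := ENNReal.toReal_sum fun i _ => measure_ne_top P _
  -- combine
  have hchain : a * (P {ω | (⨅ i : Fin n, ∑ j : Fin m, X i j ω) ≤ c}).toReal ≤
      (n : ℝ) * (1 - ε * W / m) ^ m := by
    calc a * (P {ω | (⨅ i : Fin n, ∑ j : Fin m, X i j ω) ≤ c}).toReal
        ≤ a * ∑ i : Fin n, (P (A i)).toReal := by
          exact mul_le_mul_of_nonneg_left hunion ha0.le
      _ = ∑ i : Fin n, a * (P (A i)).toReal := Finset.mul_sum _ _ _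
      _ ≤ ∑ i : Fin n, ∫ ω, g i ω ∂P := Finset.sum_le_sum fun i _ => hmarkov i
      _ ≤ (n : ℝ) * (1 - ε * W / m) ^ m := hΦ
  -- numeric bound : n * (1 - εW/m)^m ≤ n * exp(-ε²W/2) * a
  have hm0 : (0 : ℝ) < m := by exact_mod_cast hm
  have hbase : (1 - ε * W / m) ^ m ≤ Real.exp (-(ε * W)) := by
    have h1 : (0 : ℝ) ≤ 1 - ε * W / m := by linarith
    have h2 : 1 - ε * W / m ≤ Real.exp (-(ε * W / m)) := by
      have := Real.add_one_le_exp (-(ε * W / m))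
      linarith
    calc (1 - ε * W / m) ^ m ≤ Real.exp (-(ε * W / m)) ^ m :=
          pow_le_pow_left₀ h1 h2 m
      _ = Real.exp ((m : ℝ) * -(ε * W / m)) := by rw [← Real.exp_nat_mul]
      _ = Real.exp (-(ε * W)) := by
          congr 1
          field_simp
  have haexp : a = Real.exp (c * Real.log (1 - ε)) := by
    rw [ha, Real.rpow_def_of_pos hb0, mul_comm]
  have hnum : Real.exp (-(ε * W)) ≤ Real.exp (-(ε ^ 2) * W / 2) * a := by
    rw [haexp, ← Real.exp_add]
    apply Real.exp_le_exp.2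
    have hkey := key_ineq hε0.le hε1
    have : 0 ≤ W * ((1 - ε) * Real.log (1 - ε) + ε - ε ^ 2 / 2) :=
      mul_nonneg hW hkey
    rw [hc]
    nlinarith [this]
  have hfinal : a * (P {ω | (⨅ i : Fin n, ∑ j : Fin m, X i j ω) ≤ c}).toReal ≤
      a * ((n : ℝ) * Real.exp (-(ε ^ 2) * W / 2)) := by
    calc a * (P {ω | (⨅ i : Fin n, ∑ j : Fin m, X i j ω) ≤ c}).toReal
        ≤ (n : ℝ) * (1 - ε * W / m) ^ m := hchain
      _ ≤ (n : ℝ) * Real.exp (-(ε * W)) := by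
          apply mul_le_mul_of_nonneg_left hbase (Nat.cast_nonneg n)
      _ ≤ (n : ℝ) * (Real.exp (-(ε ^ 2) * W / 2) * a) := by
          apply mul_le_mul_of_nonneg_left hnum (Nat.cast_nonneg n)
      _ = a * ((n : ℝ) * Real.exp (-(ε ^ 2) * W / 2)) := by ring
  exact le_of_mul_le_mul_left hfinal ha0
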